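/- arXiv:1906.04612 — 3 statements merged into one kernel-verified Lean document; each statement's English description precedes it below -/
import Mathlib

section
/- Let n be a positive natural number, let Δ : ℝⁿ → ℝ be integrable with respect to Lebesgue measure, and let g : ℝⁿ → ℝ be a probability density with respect to Lebesgue measure whose Fourier transform satisfies 𝓕g(ω) ≠ −1 for every ω ∈ ℝⁿ. If (Δ ∗ g)(x) = −Δ(x) for Lebesgue-almost every x ∈ ℝⁿ, then Δ(x) = 0 for Lebesgue-almost every x ∈ ℝⁿ. -/
set_option maxHeartbeats 1000000

open MeasureTheory Real
open scoped FourierTransform RealInnerProductSpace SchwartzMap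

lemma fourier_conv {n : ℕ} {f g : EuclideanSpace ℝ (Fin n) → ℂ}
    (hf : Integrable f) (hg : Integrable g) (ω : EuclideanSpace ℝ (Fin n)) :
    𝓕 (fun x => ∫ t, f t * g (x - t)) ω = 𝓕 f ω * 𝓕 g ω := by
  set c : EuclideanSpace ℝ (Fin n) → ℂ :=
    fun x => Complex.exp ((↑(-2 * π * ⟪x, ω⟫) : ℂ) * Complex.I) with hc_def
  have hc_norm : ∀ x, ‖c x‖ = 1 := fun x => Complex.norm_exp_ofReal_mul_I _
  have hc_cont : Continuous c := by
    apply Complex.continuous_exp.comp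
    exact (Complex.continuous_ofReal.comp
      (continuous_const.mul (continuous_id.inner continuous_const))).mul continuous_const
  have hc_mul : ∀ x t, c (x + t) = c x * c t := by
    intro x t
    have h : ((↑(-2 * π * ⟪x + t, ω⟫) : ℂ) * Complex.I)
        = (↑(-2 * π * ⟪x, ω⟫) : ℂ) * Complex.I + (↑(-2 * π * ⟪t, ω⟫) : ℂ) * Complex.I := by
      push_cast [inner_add_left]
      ring
    simp only [hc_def, h, Complex.exp_add]
  have h1 : Integrable (fun p : EuclideanSpace ℝ (Fin n) × EuclideanSpace ℝ (Fin n) =>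
      f p.2 * g (p.1 - p.2)) (volume.prod volume) := by
    simpa using hf.convolution_integrand (ContinuousLinearMap.mul ℂ ℂ) hg
  have key : Integrable (fun p : EuclideanSpace ℝ (Fin n) × EuclideanSpace ℝ (Fin n) =>
      c p.1 * (f p.2 * g (p.1 - p.2))) (volume.prod volume) := by
    refine h1.norm.mono' ((hc_cont.comp continuous_fst).aestronglyMeasurable.mul h1.1)
      (ae_of_all _ fun p => ?_)
    rw [norm_mul, hc_norm, one_mul]
  rw [Real.fourier_eq']
  simp_rw [smul_eq_mul]
  calc ∫ x, c x * ∫ t, f t * g (x - t)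
      = ∫ x, ∫ t, c x * (f t * g (x - t)) := by
        refine integral_congr_ae (ae_of_all _ fun x => ?_)
        exact (integral_const_mul _ _).symm
    _ = ∫ t, ∫ x, c x * (f t * g (x - t)) := integral_integral_swap key
    _ = ∫ t, (c t * f t) * 𝓕 g ω := by
        refine integral_congr_ae (ae_of_all _ fun t => ?_)
        calc ∫ x, c x * (f t * g (x - t))
            = ∫ x, c (x + t) * (f t * g x) := by
              rw [← integral_add_right_eq_self (fun x => c x * (f t * g (x - t))) t]
              simp
          _ = (c t * f t) * ∫ x, c x * g x := by
              rw [← integral_const_mul]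
              refine integral_congr_ae (ae_of_all _ fun x => ?_)
              simp only [hc_mul]
              ring
          _ = (c t * f t) * 𝓕 g ω := by
              rw [Real.fourier_eq']
              simp_rw [smul_eq_mul]
              rfl
    _ = (∫ t, c t * f t) * 𝓕 g ω := integral_mul_const _ _
    _ = 𝓕 f ω * 𝓕 g ω := by
        simp only [Real.fourier_eq', smul_eq_mul]
        rfl

lemma fourier_inj {n : ℕ} {h : EuclideanSpace ℝ (Fin n) → ℂ} (hi : Integrable h)
    (h0 : ∀ ω, 𝓕 h ω = 0) :
    ∀ᵐ x ∂(volume : Measure (EuclideanSpace ℝ (Fin n))), h x = 0 := by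
  apply ae_eq_zero_of_integral_contDiff_smul_eq_zero hi.locallyIntegrable
  intro ψ hψ_smooth hψ_supp
  have hψc_supp : HasCompactSupport (fun x => (ψ x : ℂ)) := by
    apply hψ_supp.comp_left (g := fun r : ℝ => (r : ℂ))
    simp
  have hψc_smooth := Complex.ofRealCLM.contDiff.comp hψ_smooth
  let G : 𝓢(EuclideanSpace ℝ (Fin n), ℂ) :=
    { toFun := fun x => (ψ x : ℂ)
      smooth' := hψc_smooth
      decay' := by
        intro k m
        have hD : HasCompactSupport (iteratedFDeriv ℝ m (fun x => (ψ x : ℂ))) :=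
          hψc_supp.iteratedFDeriv m
        have hDc : Continuous (iteratedFDeriv ℝ m (fun x => (ψ x : ℂ))) :=
          hψc_smooth.continuous_iteratedFDeriv (by exact_mod_cast le_top)
        have hP : HasCompactSupport
            (fun x : EuclideanSpace ℝ (Fin n) =>
              ‖x‖ ^ k * ‖iteratedFDeriv ℝ m (fun x => (ψ x : ℂ)) x‖) :=
          (hD.norm).mul_left
        obtain ⟨C, hC⟩ := (((continuous_norm.pow k).mul hDc.norm)).bounded_above_of_compact_support hP
        exact ⟨C, fun x => by simpa using hC x⟩ }
  set φ := (FourierTransform.fourierCLE ℂ 𝓢(EuclideanSpace ℝ (Fin n), ℂ)).symm G with hφ_def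
  have hφ : 𝓕 ⇑φ = ⇑G := by
    rw [← SchwartzMap.fourier_coe, ← FourierTransform.fourierCLE_apply (R := ℂ) (f := φ), hφ_def,
      ContinuousLinearEquiv.apply_symm_apply]
  have key := VectorFourier.integral_fourierIntegral_smul_eq_flip
      (L := innerₗ (EuclideanSpace ℝ (Fin n))) Real.continuous_fourierChar continuous_inner
      hi (φ.integrable (μ := volume))
  rw [flip_innerₗ] at key
  have h0' : ∀ ξ, VectorFourier.fourierIntegral 𝐞 volume
      (innerₗ (EuclideanSpace ℝ (Fin n))) h ξ = 0 := h0
  have hr : ∫ x, h x • (VectorFourier.fourierIntegral 𝐞 volume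
      (innerₗ (EuclideanSpace ℝ (Fin n))) ⇑φ x) = 0 := by
    rw [← key]
    simp [h0']
  have hφ' : (VectorFourier.fourierIntegral 𝐞 volume
      (innerₗ (EuclideanSpace ℝ (Fin n))) ⇑φ) = ⇑G := hφ
  rw [hφ'] at hr
  calc ∫ x, ψ x • h x = ∫ x, h x • G x := by
        refine integral_congr_ae (ae_of_all _ fun x => ?_)
        show ψ x • h x = h x • ((ψ x : ℂ))
        rw [smul_eq_mul, Complex.real_smul, mul_comm]
    _ = 0 := hr

/-- If `g` is a probability density whose Fourier transform never equals `−1`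
and `Δ ∗ g = −Δ` a.e. for an integrable `Δ`, then `Δ = 0` a.e. -/
theorem delta_eq_zero_of_convolution_eq_neg
    (n : ℕ) (hn : 0 < n)
    (Δ g : EuclideanSpace ℝ (Fin n) → ℝ)
    (hΔ_int : Integrable Δ)
    (hg_nn : ∀ x, 0 ≤ g x) (hg_meas : Measurable g)
    (hg_int : Integrable g) (hg_one : (∫ x, g x) = 1)
    (hg_fourier : ∀ ω : EuclideanSpace ℝ (Fin n), 𝓕 (fun x => (g x : ℂ)) ω ≠ -1)
    (heq : ∀ᵐ x ∂(volume : Measure (EuclideanSpace ℝ (Fin n))),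
      (∫ t, Δ t * g (x - t)) = -Δ x) :
    ∀ᵐ x ∂(volume : Measure (EuclideanSpace ℝ (Fin n))), Δ x = 0 := by
  have hfc : Integrable (fun x : EuclideanSpace ℝ (Fin n) => (Δ x : ℂ)) := hΔ_int.ofReal
  have hgc : Integrable (fun x : EuclideanSpace ℝ (Fin n) => (g x : ℂ)) := hg_int.ofReal
  have hconv_ae : (fun x : EuclideanSpace ℝ (Fin n) => ∫ t, (Δ t : ℂ) * (g (x - t) : ℂ))
      =ᵐ[volume] fun x => -(Δ x : ℂ) := by
    filter_upwards [heq] with x hx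
    have h1 : ∫ t, (Δ t : ℂ) * (g (x - t) : ℂ) = ((∫ t, Δ t * g (x - t) : ℝ) : ℂ) := by
      norm_cast
    rw [h1, hx]
    push_cast
    ring
  have hF : ∀ ω, 𝓕 (fun x : EuclideanSpace ℝ (Fin n) => (Δ x : ℂ)) ω
      * 𝓕 (fun x : EuclideanSpace ℝ (Fin n) => (g x : ℂ)) ω
      = -𝓕 (fun x : EuclideanSpace ℝ (Fin n) => (Δ x : ℂ)) ω := by
    intro ω
    rw [← fourier_conv hfc hgc ω]
    calc 𝓕 (fun x : EuclideanSpace ℝ (Fin n) => ∫ t, (Δ t : ℂ) * (g (x - t) : ℂ)) ω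
        = 𝓕 (fun x : EuclideanSpace ℝ (Fin n) => -(Δ x : ℂ)) ω := by
          simp only [Real.fourier_eq]
          refine integral_congr_ae ?_
          filter_upwards [hconv_ae] with x hx
          rw [hx]
      _ = -𝓕 (fun x : EuclideanSpace ℝ (Fin n) => (Δ x : ℂ)) ω := by
          simp only [Real.fourier_eq, smul_neg]
          exact integral_neg _
  have hF0 : ∀ ω, 𝓕 (fun x : EuclideanSpace ℝ (Fin n) => (Δ x : ℂ)) ω = 0 := by
    intro ω
    have h2 : 𝓕 (fun x : EuclideanSpace ℝ (Fin n) => (Δ x : ℂ)) ω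
        * (𝓕 (fun x : EuclideanSpace ℝ (Fin n) => (g x : ℂ)) ω + 1) = 0 := by
      rw [mul_add, hF ω]
      ring
    rcases mul_eq_zero.1 h2 with h | h
    · exact h
    · exact absurd (by linear_combination h) (hg_fourier ω)
  filter_upwards [fourier_inj hfc hF0] with x hx
  exact_mod_cast hx
end

section
/- Let n be a positive natural number and let p, q : ℝⁿ → ℝ be nonnegative integrable functions with respect to Lebesgue measure such that p(x) + q(x) > 0 for Lebesgue-almost every x ∈ ℝⁿ. Let D* : ℝⁿ → ℝ be defined by D*(x) = p(x)/(p(x) + q(x)). Then for every measurable function D : ℝⁿ → ℝ with 0 < D(x) < 1 for all x, such that the functions x ↦ p(x)·log(D(x)) + q(x)·log(1 − D(x)) and x ↦ p(x)·log(D*(x)) + q(x)·log(1 − D*(x)) are integrable, one has ∫ [p(x)·log(D(x)) + q(x)·log(1 − D(x))] dx ≤ ∫ [p(x)·log(D*(x)) + q(x)·log(1 − D*(x))] dx. -/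
open MeasureTheory Real

lemma pointwise_opt (a b t : ℝ) (ha : 0 ≤ a) (hb : 0 ≤ b) (hab : 0 < a + b)
    (ht0 : 0 < t) (ht1 : t < 1) :
    a * Real.log t + b * Real.log (1 - t) ≤
      a * Real.log (a / (a + b)) + b * Real.log (1 - a / (a + b)) := by
  have habne : a + b ≠ 0 := ne_of_gt hab
  rcases eq_or_lt_of_le ha with h0 | hapos
  · -- a = 0
    simp only [← h0, zero_mul, zero_add, zero_div, sub_zero, Real.log_one, mul_zero]
    exact mul_nonpos_of_nonneg_of_nonpos hb
      (Real.log_nonpos (by linarith) (by linarith))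
  rcases eq_or_lt_of_le hb with h0 | hbpos
  · -- b = 0
    simp only [← h0, zero_mul, add_zero]
    rw [div_self (ne_of_gt hapos), Real.log_one, mul_zero]
    exact mul_nonpos_of_nonneg_of_nonpos ha (Real.log_nonpos (le_of_lt ht0) (le_of_lt ht1))
  set s : ℝ := a / (a + b) with hs
  have hs0 : 0 < s := div_pos hapos hab
  have hs1 : s < 1 := by
    rw [hs, div_lt_one hab]; linarith
  have h1t : 0 < 1 - t := by linarith
  have h1s : 0 < 1 - s := by linarith
  have key1 : a / s = a + b := by
    rw [hs]; field_simp
  have key2 : b / (1 - s) = a + b := by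
    have : 1 - s = b / (a + b) := by rw [hs]; field_simp; ring
    rw [this]; field_simp
  have hl1 : Real.log (t / s) ≤ t / s - 1 :=
    Real.log_le_sub_one_of_pos (div_pos ht0 hs0)
  have hl2 : Real.log ((1 - t) / (1 - s)) ≤ (1 - t) / (1 - s) - 1 :=
    Real.log_le_sub_one_of_pos (div_pos h1t h1s)
  have e1 : Real.log (t / s) = Real.log t - Real.log s :=
    Real.log_div (ne_of_gt ht0) (ne_of_gt hs0)
  have e2 : Real.log ((1 - t) / (1 - s)) = Real.log (1 - t) - Real.log (1 - s) :=
    Real.log_div (ne_of_gt h1t) (ne_of_gt h1s)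
  have m1 : a * (Real.log t - Real.log s) ≤ a * (t / s - 1) := by
    rw [← e1]; exact mul_le_mul_of_nonneg_left hl1 ha
  have m2 : b * (Real.log (1 - t) - Real.log (1 - s)) ≤ b * ((1 - t) / (1 - s) - 1) := by
    rw [← e2]; exact mul_le_mul_of_nonneg_left hl2 hb
  have c1 : a * (t / s) = (a + b) * t := by
    rw [hs]; field_simp
  have c2 : b * ((1 - t) / (1 - s)) = (a + b) * (1 - t) := by
    have h1seq : 1 - s = b / (a + b) := by rw [hs]; field_simp; ring
    rw [h1seq]; field_simp
  nlinarith [m1, m2, c1, c2]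

/-- The optimal discriminator: among all discriminators `D` with values in
`(0,1)`, the adversarial objective `∫ p·log D + q·log(1−D)` is maximized by
`D*(x) = p(x)/(p(x)+q(x))`. -/
theorem optimal_discriminator
    (n : ℕ) (hn : 0 < n)
    (p q : EuclideanSpace ℝ (Fin n) → ℝ)
    (hp_nn : ∀ x, 0 ≤ p x) (hp_int : Integrable p)
    (hq_nn : ∀ x, 0 ≤ q x) (hq_int : Integrable q)
    (hpos : ∀ᵐ x ∂(volume : Measure (EuclideanSpace ℝ (Fin n))), 0 < p x + q x)
    (Dstar : EuclideanSpace ℝ (Fin n) → ℝ)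
    (hDstar : Dstar = fun x => p x / (p x + q x)) :
    ∀ D : EuclideanSpace ℝ (Fin n) → ℝ, Measurable D → (∀ x, 0 < D x ∧ D x < 1) →
      Integrable (fun x => p x * Real.log (D x) + q x * Real.log (1 - D x)) →
      Integrable (fun x => p x * Real.log (Dstar x) + q x * Real.log (1 - Dstar x)) →
      (∫ x, p x * Real.log (D x) + q x * Real.log (1 - D x)) ≤
        ∫ x, p x * Real.log (Dstar x) + q x * Real.log (1 - Dstar x) := by
  intro D hDmeas hDrange hInt1 hInt2
  refine integral_mono_ae hInt1 hInt2 ?_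
  filter_upwards [hpos] with x hx
  subst hDstar
  exact pointwise_opt (p x) (q x) (D x) (hp_nn x) (hq_nn x) hx
    (hDrange x).1 (hDrange x).2
end

section
/- Let n be a positive natural number and let p, q : ℝⁿ → ℝ be probability densities with respect to Lebesgue measure. Let μ and ν be the probability measures with densities p and q respectively, and let m = (1/2)(μ + ν). If the functions x ↦ p(x)·log(2p(x)/(p(x)+q(x))) and x ↦ q(x)·log(2q(x)/(p(x)+q(x))) are integrable (with the convention that the integrand is 0 where the numerator density vanishes), then ∫ p(x)·log(p(x)/(p(x)+q(x))) dx + ∫ q(x)·log(q(x)/(p(x)+q(x))) dx = −2·log 2 + KL(μ ‖ m) + KL(ν ‖ m). -/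
open MeasureTheory Real
open scoped ENNReal Classical

/-- The Kullback–Leibler divergence of `μ` from `ν`: `∫ log(dμ/dν) dμ` when `μ ≪ ν`
and the log-likelihood ratio is integrable, and `∞` otherwise. -/
noncomputable def klDiv {α : Type*} [MeasurableSpace α] (μ ν : Measure α) : ℝ≥0∞ :=
  if μ ≪ ν ∧ Integrable (llr μ ν) μ then ENNReal.ofReal (∫ x, llr μ ν x ∂μ) else ⊤

lemma kl_aux {α : Type*} [MeasureSpace α] [SigmaFinite (volume : Measure α)]
    (p q : α → ℝ)
    (hp_nn : ∀ x, 0 ≤ p x) (hp_meas : Measurable p)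
    (hp_int : Integrable p) (hp_one : (∫ x, p x) = 1)
    (hq_nn : ∀ x, 0 ≤ q x) (hq_meas : Measurable q)
    (hq_int : Integrable q) (hq_one : (∫ x, q x) = 1)
    (μ ν m : Measure α)
    (hμ : μ = volume.withDensity (fun x => ENNReal.ofReal (p x)))
    (hν : ν = volume.withDensity (fun x => ENNReal.ofReal (q x)))
    (hm : m = (2⁻¹ : ℝ≥0∞) • (μ + ν))
    (hint : Integrable (fun x => p x * Real.log (2 * p x / (p x + q x)))) :
    (klDiv μ m).toReal = ∫ x, p x * Real.log (2 * p x / (p x + q x)) := by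
  set L : α → ℝ := fun x => Real.log (2 * p x / (p x + q x)) with hL
  -- basic measures facts
  have hμv : μ ≪ (volume : Measure α) := hμ ▸ withDensity_absolutelyContinuous _ _
  have hμ_fin : IsFiniteMeasure μ := by
    rw [hμ]; constructor
    rw [withDensity_apply _ MeasurableSet.univ, Measure.restrict_univ,
      ← ofReal_integral_eq_lintegral_ofReal hp_int (Filter.Eventually.of_forall hp_nn)]
    exact ENNReal.ofReal_lt_top
  have hν_fin : IsFiniteMeasure ν := by
    rw [hν]; constructor
    rw [withDensity_apply _ MeasurableSet.univ, Measure.restrict_univ,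
      ← ofReal_integral_eq_lintegral_ofReal hq_int (Filter.Eventually.of_forall hq_nn)]
    exact ENNReal.ofReal_lt_top
  haveI := hμ_fin; haveI := hν_fin
  have hm_fin : IsFiniteMeasure m := by
    rw [hm]; constructor
    rw [Measure.smul_apply, smul_eq_mul]
    exact ENNReal.mul_lt_top (by norm_num) (measure_lt_top _ _)
  haveI := hm_fin
  -- m as withDensity
  set d : α → ℝ≥0∞ := fun x => 2⁻¹ * (ENNReal.ofReal (p x) + ENNReal.ofReal (q x)) with hd
  have hd_meas : Measurable d := ((hp_meas.ennreal_ofReal.add hq_meas.ennreal_ofReal).const_mul _)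
  have hmd : m = volume.withDensity d := by
    have h1 : (volume.withDensity fun x => ENNReal.ofReal (p x))
        + (volume.withDensity fun x => ENNReal.ofReal (q x))
        = volume.withDensity (fun x => ENNReal.ofReal (p x) + ENNReal.ofReal (q x)) :=
      (withDensity_add_left hp_meas.ennreal_ofReal _).symm
    rw [hm, hμ, hν, h1,
      ← withDensity_smul (f := fun x => ENNReal.ofReal (p x) + ENNReal.ofReal (q x)) _ (hp_meas.ennreal_ofReal.add hq_meas.ennreal_ofReal)]
    congr 1
  -- absolute continuity
  have hac : μ ≪ m := by
    intro s hs
    rw [hm, Measure.smul_apply, smul_eq_mul] at hs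
    have h2 : (μ + ν) s = 0 := ((mul_eq_zero.mp hs).resolve_left (by norm_num))
    rw [Measure.add_apply] at h2
    exact (add_eq_zero.mp h2).1
  -- a.e. positivity of p w.r.t. μ
  have hp_pos : ∀ᵐ x ∂μ, 0 < p x := by
    rw [hμ, ae_iff]
    have hset : {x | ¬ 0 < p x} = {x | p x ≤ 0} := by ext x; simp
    have hs : MeasurableSet {x | p x ≤ 0} := measurableSet_le hp_meas measurable_const
    rw [hset, withDensity_apply _ hs]
    rw [setLIntegral_congr_fun hs
      (fun x hx => ENNReal.ofReal_eq_zero.2 hx)]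
    simp
  -- llr computation
  have h_llr : llr μ m =ᵐ[μ] L := by
    have k1 := Measure.rnDeriv_mul_rnDeriv (κ := (volume : Measure α)) hac
    have k2 : m.rnDeriv volume =ᵐ[volume] d := hmd ▸ Measure.rnDeriv_withDensity volume hd_meas
    have k3 : μ.rnDeriv volume =ᵐ[volume] fun x => ENNReal.ofReal (p x) :=
      hμ ▸ Measure.rnDeriv_withDensity volume hp_meas.ennreal_ofReal
    filter_upwards [hμv.ae_le k1, hμv.ae_le k2, hμv.ae_le k3, hp_pos] with x h1 h2 h3 hpx
    have hpq : 0 < p x + q x := by linarith [hq_nn x]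
    have hp0 : ENNReal.ofReal (p x) ≠ 0 := by
      simp only [ne_eq, ENNReal.ofReal_eq_zero, not_le]; exact hpx
    have hd0 : d x ≠ 0 :=
      mul_ne_zero (by norm_num) (fun h => hp0 (add_eq_zero.mp h).1)
    have hdt : d x ≠ ⊤ := by
      simp only [hd, ne_eq]
      exact ENNReal.mul_ne_top (by norm_num) (ENNReal.add_ne_top.2 ⟨ENNReal.ofReal_ne_top, ENNReal.ofReal_ne_top⟩)
    have heq : μ.rnDeriv m x * d x = ENNReal.ofReal (p x) := by
      rw [← h2, ← h3]; exact h1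
    have hg : μ.rnDeriv m x = ENNReal.ofReal (p x) / d x :=
      (ENNReal.eq_div_iff hd0 hdt).2 (by rw [mul_comm]; exact heq)
    have hdtr : (d x).toReal = 2⁻¹ * (p x + q x) := by
      simp [hd, ENNReal.toReal_mul, ENNReal.toReal_add ENNReal.ofReal_ne_top ENNReal.ofReal_ne_top,
        ENNReal.toReal_ofReal (hp_nn x), ENNReal.toReal_ofReal (hq_nn x)]
    have : (μ.rnDeriv m x).toReal = 2 * p x / (p x + q x) := by
      rw [hg, ENNReal.toReal_div, hdtr, ENNReal.toReal_ofReal (hp_nn x)]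
      field_simp
    simp only [llr, this, hL]
  -- integral conversion
  have h_int_L : Integrable L μ := by
    rw [hμ, integrable_withDensity_iff hp_meas.ennreal_ofReal
      (Filter.Eventually.of_forall (fun x => ENNReal.ofReal_lt_top))]
    refine hint.congr (Filter.Eventually.of_forall (fun x => ?_))
    show p x * Real.log (2 * p x / (p x + q x)) = L x * (ENNReal.ofReal (p x)).toReal
    rw [ENNReal.toReal_ofReal (hp_nn x), mul_comm]
  have h_int : Integrable (llr μ m) μ := h_int_L.congr h_llr.symm
  have h_intval : ∫ x, llr μ m x ∂μ = ∫ x, p x * L x := by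
    rw [integral_congr_ae h_llr, hμ]
    have hcoe : (fun x => ENNReal.ofReal (p x)) = fun x => ((p x).toNNReal : ℝ≥0∞) := rfl
    rw [hcoe, integral_withDensity_eq_integral_smul hp_meas.real_toNNReal]
    congr 1
    funext x
    simp [NNReal.smul_def, Real.coe_toNNReal _ (hp_nn x)]
  -- nonnegativity
  have hbound : ∀ x, (p x - q x) / 2 ≤ p x * L x := by
    intro x
    rcases (hp_nn x).eq_or_lt with h0 | hpos
    · rw [← h0]; simp; linarith [hq_nn x]
    · have hpq : 0 < p x + q x := by linarith [hq_nn x]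
      have h1 : Real.log ((p x + q x) / (2 * p x)) ≤ (p x + q x) / (2 * p x) - 1 :=
        Real.log_le_sub_one_of_pos (by positivity)
      have h2 : L x = - Real.log ((p x + q x) / (2 * p x)) := by
        rw [hL, ← Real.log_inv, inv_div]
      have h3 : 1 - (p x + q x) / (2 * p x) ≤ L x := by rw [h2]; linarith
      have h4 : p x * (1 - (p x + q x) / (2 * p x)) = (p x - q x) / 2 := by
        field_simp; ring
      calc (p x - q x) / 2 = p x * (1 - (p x + q x) / (2 * p x)) := h4.symm
        _ ≤ p x * L x := mul_le_mul_of_nonneg_left h3 (hp_nn x)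
  have hA_nonneg : 0 ≤ ∫ x, p x * L x := by
    have h0 : (∫ x, (p x - q x) / 2) = 0 := by
      rw [integral_div, integral_sub hp_int hq_int, hp_one, hq_one]; simp
    calc (0:ℝ) = ∫ x, (p x - q x) / 2 := h0.symm
      _ ≤ ∫ x, p x * L x := integral_mono ((hp_int.sub hq_int).div_const 2) hint hbound
  -- conclude
  rw [klDiv, if_pos ⟨hac, h_int⟩, h_intval, ENNReal.toReal_ofReal hA_nonneg]

/-- Substituting the optimal discriminator into the adversarial objective
yields, up to the constant `−2 log 2 = −log 4`, the sum of the two Kullback–Leibler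
divergences from the mixture (i.e. twice the Jensen–Shannon divergence). -/
theorem objective_eq_jsd
    (n : ℕ) (hn : 0 < n)
    (p q : EuclideanSpace ℝ (Fin n) → ℝ)
    (hp_nn : ∀ x, 0 ≤ p x) (hp_meas : Measurable p)
    (hp_int : Integrable p) (hp_one : (∫ x, p x) = 1)
    (hq_nn : ∀ x, 0 ≤ q x) (hq_meas : Measurable q)
    (hq_int : Integrable q) (hq_one : (∫ x, q x) = 1)
    (μ ν m : Measure (EuclideanSpace ℝ (Fin n)))
    (hμ : μ = volume.withDensity (fun x => ENNReal.ofReal (p x)))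
    (hν : ν = volume.withDensity (fun x => ENNReal.ofReal (q x)))
    (hm : m = (2⁻¹ : ℝ≥0∞) • (μ + ν))
    (hint_p : Integrable (fun x => p x * Real.log (2 * p x / (p x + q x))))
    (hint_q : Integrable (fun x => q x * Real.log (2 * q x / (p x + q x)))) :
    (∫ x, p x * Real.log (p x / (p x + q x))) + (∫ x, q x * Real.log (q x / (p x + q x))) =
      -2 * Real.log 2 + (klDiv μ m).toReal + (klDiv ν m).toReal := by
  have hm' : m = (2⁻¹ : ℝ≥0∞) • (ν + μ) := by rw [hm, add_comm]
  have hint_q' : Integrable (fun x => q x * Real.log (2 * q x / (q x + p x))) := by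
    refine hint_q.congr (Filter.Eventually.of_forall (fun x => ?_))
    show q x * Real.log (2 * q x / (p x + q x)) = q x * Real.log (2 * q x / (q x + p x))
    rw [add_comm (p x)]
  have h1 : (klDiv μ m).toReal = ∫ x, p x * Real.log (2 * p x / (p x + q x)) :=
    kl_aux p q hp_nn hp_meas hp_int hp_one hq_nn hq_meas hq_int hq_one μ ν m hμ hν hm hint_p
  have h2 : (klDiv ν m).toReal = ∫ x, q x * Real.log (2 * q x / (q x + p x)) :=
    kl_aux q p hq_nn hq_meas hq_int hq_one hp_nn hp_meas hp_int hp_one ν μ m hν hμ hm' hint_q'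
  have h2' : (klDiv ν m).toReal = ∫ x, q x * Real.log (2 * q x / (p x + q x)) := by
    rw [h2]
    refine integral_congr_ae (Filter.Eventually.of_forall (fun x => ?_))
    show q x * Real.log (2 * q x / (q x + p x)) = q x * Real.log (2 * q x / (p x + q x))
    rw [add_comm (q x)]
  -- pointwise splitting for p
  have hpt : ∀ x, p x * Real.log (p x / (p x + q x))
      = p x * Real.log (2 * p x / (p x + q x)) - p x * Real.log 2 := by
    intro x
    rcases (hp_nn x).eq_or_lt with h0 | hpos
    · rw [← h0]; ring
    · have hpq : 0 < p x + q x := by linarith [hq_nn x]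
      have hne : p x / (p x + q x) ≠ 0 := by positivity
      rw [mul_div_assoc, Real.log_mul two_ne_zero hne]
      ring
  have hqt : ∀ x, q x * Real.log (q x / (p x + q x))
      = q x * Real.log (2 * q x / (p x + q x)) - q x * Real.log 2 := by
    intro x
    rcases (hq_nn x).eq_or_lt with h0 | hpos
    · rw [← h0]; ring
    · have hpq : 0 < p x + q x := by linarith [hp_nn x]
      have hne : q x / (p x + q x) ≠ 0 := by positivity
      rw [mul_div_assoc, Real.log_mul two_ne_zero hne]
      ring
  have hip : (∫ x, p x * Real.log (p x / (p x + q x)))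
      = (∫ x, p x * Real.log (2 * p x / (p x + q x))) - Real.log 2 := by
    calc (∫ x, p x * Real.log (p x / (p x + q x)))
        = ∫ x, (p x * Real.log (2 * p x / (p x + q x)) - p x * Real.log 2) :=
          integral_congr_ae (Filter.Eventually.of_forall hpt)
      _ = (∫ x, p x * Real.log (2 * p x / (p x + q x))) - ∫ x, p x * Real.log 2 :=
          integral_sub hint_p (hp_int.mul_const _)
      _ = (∫ x, p x * Real.log (2 * p x / (p x + q x))) - Real.log 2 := by
          rw [integral_mul_const, hp_one, one_mul]
  have hiq : (∫ x, q x * Real.log (q x / (p x + q x)))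
      = (∫ x, q x * Real.log (2 * q x / (p x + q x))) - Real.log 2 := by
    calc (∫ x, q x * Real.log (q x / (p x + q x)))
        = ∫ x, (q x * Real.log (2 * q x / (p x + q x)) - q x * Real.log 2) :=
          integral_congr_ae (Filter.Eventually.of_forall hqt)
      _ = (∫ x, q x * Real.log (2 * q x / (p x + q x))) - ∫ x, q x * Real.log 2 :=
          integral_sub hint_q (hq_int.mul_const _)
      _ = (∫ x, q x * Real.log (2 * q x / (p x + q x))) - Real.log 2 := by
          rw [integral_mul_const, hq_one, one_mul]
  rw [hip, hiq, h1, h2']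
  ring
end
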